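/- Let X and V be measurable spaces and ι : V → X a measurable embedding (measurable, injective, mapping measurable sets to measurable sets). Let T be a nonempty index set and, for each t ∈ T, let κ_t be a Markov kernel on X and κ^V_t a Markov kernel on V satisfying the intertwining relation κ_t(ι v) = (κ^V_t v) pushed forward by ι, for every v ∈ V. If there is at most one probability measure on X that is invariant for κ_t for every t ∈ T, then there is at most one probability measure on V that is invariant for κ^V_t for every t ∈ T. -/

import Mathlib

open MeasureTheory

/-- Uniqueness of invariant probability measures transfers from a space `X` to a
measurably embedded invariant subspace `V` (abstract kernel form of Lemma 3.2). -/
theorem stmt4 {X V : Type*} [MeasurableSpace X] [MeasurableSpace V]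
    (ι : V → X) (hι_meas : Measurable ι) (hι_inj : Function.Injective ι)
    (hι_img : ∀ s : Set V, MeasurableSet s → MeasurableSet (ι '' s))
    {T : Type*} [Nonempty T]
    (κ : T → X → Measure X) (κV : T → V → Measure V)
    (hκ_meas : ∀ t, Measurable (κ t)) (hκV_meas : ∀ t, Measurable (κV t))
    (hκ_prob : ∀ t x, IsProbabilityMeasure (κ t x))
    (hκV_prob : ∀ t v, IsProbabilityMeasure (κV t v))
    (h_intertwine : ∀ t v, κ t (ι v) = (κV t v).map ι)
    (h_unique : ∀ μ₁ μ₂ : Measure X,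
      IsProbabilityMeasure μ₁ → IsProbabilityMeasure μ₂ →
      (∀ t, μ₁.bind (κ t) = μ₁) → (∀ t, μ₂.bind (κ t) = μ₂) → μ₁ = μ₂) :
    ∀ ν₁ ν₂ : Measure V,
      IsProbabilityMeasure ν₁ → IsProbabilityMeasure ν₂ →
      (∀ t, ν₁.bind (κV t) = ν₁) → (∀ t, ν₂.bind (κV t) = ν₂) → ν₁ = ν₂ := by
  intro ν₁ ν₂ h₁ h₂ hinv₁ hinv₂
  -- pushforward invariance
  have key : ∀ (ν : Measure V), IsProbabilityMeasure ν → (∀ t, ν.bind (κV t) = ν) →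
      ∀ t, (ν.map ι).bind (κ t) = ν.map ι := by
    intro ν hν hinv t
    ext s hs
    have hm : Measurable fun x : X => κ t x s :=
      (Measure.measurable_coe hs).comp (hκ_meas t)
    rw [Measure.bind_apply hs (hκ_meas t).aemeasurable, lintegral_map hm hι_meas]
    have : ∀ v, κ t (ι v) s = κV t v (ι ⁻¹' s) := by
      intro v
      rw [h_intertwine t v, Measure.map_apply hι_meas hs]
    simp_rw [this]
    rw [← Measure.bind_apply (hι_meas hs) (hκV_meas t).aemeasurable, hinv t,
      Measure.map_apply hι_meas hs]
  have hmap : ν₁.map ι = ν₂.map ι := by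
    refine h_unique _ _ (Measure.isProbabilityMeasure_map hι_meas.aemeasurable)
      (Measure.isProbabilityMeasure_map hι_meas.aemeasurable)
      (key ν₁ h₁ hinv₁) (key ν₂ h₂ hinv₂)
  ext s hs
  have h1 : ν₁.map ι (ι '' s) = ν₁ s := by
    rw [Measure.map_apply hι_meas (hι_img s hs), Set.preimage_image_eq s hι_inj]
  have h2 : ν₂.map ι (ι '' s) = ν₂ s := by
    rw [Measure.map_apply hι_meas (hι_img s hs), Set.preimage_image_eq s hι_inj]
  rw [← h1, ← h2, hmap]
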